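/- Multivariate Taylor inclusion, first order: let f̂: Ω ⊆ ℝⁿ → I(ℝ) on an open convex set Ω with f̲, f̅ continuously differentiable on Ω, and suppose for each i the gH-partial ∂f̂/∂x_i(y) = [min{∂f̲/∂x_i(y), ∂f̅/∂x_i(y)}, max{∂f̲/∂x_i(y), ∂f̅/∂x_i(y)}]. Then for a, x ∈ Ω: f̂(x) ⊖_gH f̂(a) ⊆ ⋃_{c ∈ L.S.{a,x}} Σᵢ (x_i − a_i)·∂f̂/∂x_i(c), where L.S.{a,x} = {a + t(x−a) : t ∈ [0,1]} and the sum is the Minkowski sum of scalar-multiplied intervals. -/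

import Mathlib

open Set

private lemma clm_eval_sum {n : ℕ} (L : (Fin n → ℝ) →L[ℝ] ℝ) (w : Fin n → ℝ) :
    L w = ∑ i : Fin n, w i * L (Pi.single i 1) := by
  have hw : w = ∑ i : Fin n, w i • (Pi.single i 1 : Fin n → ℝ) := by
    funext j
    simp [Pi.single_apply, Finset.sum_ite_eq']
  nth_rewrite 1 [hw]
  simp [map_sum, smul_eq_mul]

private lemma mvt_segment {n : ℕ} {f : (Fin n → ℝ) → ℝ}
    {D : (Fin n → ℝ) → ((Fin n → ℝ) →L[ℝ] ℝ)} {Ω : Set (Fin n → ℝ)}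
    (hd : ∀ y ∈ Ω, HasFDerivAt f (D y) y)
    {a x : Fin n → ℝ} (hseg : ∀ t ∈ Icc (0:ℝ) 1, a + t • (x - a) ∈ Ω) :
    ∃ t ∈ Icc (0:ℝ) 1, D (a + t • (x - a)) (x - a) = f x - f a := by
  set γ : ℝ → (Fin n → ℝ) := fun t => a + t • (x - a) with hγ
  have hγd : ∀ t : ℝ, HasDerivAt γ (x - a) t := by
    intro t
    simpa [hγ] using ((hasDerivAt_id t).smul_const (x - a)).const_add a
  have hg : ∀ t ∈ Icc (0:ℝ) 1, HasDerivAt (fun s => f (γ s)) (D (γ t) (x - a)) t := by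
    intro t ht
    exact (hd (γ t) (hseg t ht)).comp_hasDerivAt t (hγd t)
  have hcont : ContinuousOn (fun s => f (γ s)) (Icc 0 1) :=
    fun t ht => ((hg t ht).continuousAt).continuousWithinAt
  obtain ⟨c, hc, hceq⟩ := exists_hasDerivAt_eq_slope (fun s => f (γ s))
    (fun t => D (γ t) (x - a)) one_pos hcont
    (fun t ht => hg t (Ioo_subset_Icc_self ht))
  refine ⟨c, Ioo_subset_Icc_self hc, ?_⟩
  have h1 : γ 1 = x := by simp [hγ]
  have h0 : γ 0 = a := by simp [hγ]
  rw [hceq, h1, h0]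
  ring

private lemma ivt_band {φ ψ : ℝ → ℝ} {t₁ t₂ v₁ v₂ z : ℝ}
    (h1 : t₁ ∈ Icc (0:ℝ) 1) (h2 : t₂ ∈ Icc (0:ℝ) 1)
    (hψ : ContinuousOn ψ (Icc 0 1))
    (hle : ∀ t ∈ Icc (0:ℝ) 1, φ t ≤ ψ t)
    (ha1 : φ t₁ ≤ v₁) (hb1 : v₁ ≤ ψ t₁)
    (ha2 : φ t₂ ≤ v₂) (hb2 : v₂ ≤ ψ t₂)
    (hz1 : v₁ ≤ z) (hz2 : z ≤ v₂) :
    ∃ t ∈ Icc (0:ℝ) 1, z ∈ Icc (φ t) (ψ t) := by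
  by_cases h : z ≤ ψ t₁
  · exact ⟨t₁, h1, ⟨le_trans ha1 hz1, h⟩⟩
  by_cases h' : φ t₂ ≤ z
  · exact ⟨t₂, h2, ⟨h', le_trans hz2 hb2⟩⟩
  push_neg at h h'
  have hsub : uIcc t₁ t₂ ⊆ Icc (0:ℝ) 1 := uIcc_subset_Icc h1 h2
  have := intermediate_value_uIcc (hψ.mono hsub)
  have hzm : z ∈ uIcc (ψ t₁) (ψ t₂) := by
    have : z < ψ t₂ := lt_of_lt_of_le h' (hle t₂ h2)
    rw [Set.mem_uIcc]
    exact Or.inl ⟨le_of_lt h, le_of_lt this⟩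
  obtain ⟨t, ht, hψt⟩ := this hzm
  exact ⟨t, hsub ht, ⟨hψt ▸ hle t (hsub ht), le_of_eq hψt.symm⟩⟩

/-- Multivariate first order Taylor inclusion: on an open convex `Ω ⊆ ℝⁿ` with `f̲`, `f̅`
continuously differentiable (derivatives `Dlo`, `Dhi`), for `a, x ∈ Ω`:
`f̂(x) ⊖_gH f̂(a) ⊆ ⋃_{c ∈ L.S.{a,x}} Σᵢ (xᵢ−aᵢ)·∂f̂/∂xᵢ(c)`, where
`∂f̂/∂xᵢ(c) = [min{∂f̲/∂xᵢ(c), ∂f̅/∂xᵢ(c)}, max{∂f̲/∂xᵢ(c), ∂f̅/∂xᵢ(c)}]` and the sum of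
the scalar-multiplied intervals is the Minkowski sum. -/
theorem multivariate_taylor_inclusion_first_order
    (n : ℕ) (flo fhi : (Fin n → ℝ) → ℝ) (hle : ∀ y, flo y ≤ fhi y)
    (Ω : Set (Fin n → ℝ)) (hΩo : IsOpen Ω) (hΩc : Convex ℝ Ω)
    (Dlo Dhi : (Fin n → ℝ) → ((Fin n → ℝ) →L[ℝ] ℝ))
    (hdlo : ∀ y ∈ Ω, HasFDerivAt flo (Dlo y) y)
    (hdhi : ∀ y ∈ Ω, HasFDerivAt fhi (Dhi y) y)
    (hclo : ContinuousOn Dlo Ω) (hchi : ContinuousOn Dhi Ω)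
    (a x : Fin n → ℝ) (ha : a ∈ Ω) (hx : x ∈ Ω) :
    Set.Icc (min (flo x - flo a) (fhi x - fhi a)) (max (flo x - flo a) (fhi x - fhi a)) ⊆
      ⋃ c ∈ segment ℝ a x,
        Set.Icc
          (∑ i : Fin n,
            min ((x i - a i) * Dlo c (Pi.single i 1)) ((x i - a i) * Dhi c (Pi.single i 1)))
          (∑ i : Fin n,
            max ((x i - a i) * Dlo c (Pi.single i 1)) ((x i - a i) * Dhi c (Pi.single i 1))) := by
  intro z hz
  set γ : ℝ → (Fin n → ℝ) := fun t => a + t • (x - a) with hγ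
  have hseg : ∀ t ∈ Icc (0:ℝ) 1, γ t ∈ Ω := fun t ht => hΩc.add_smul_sub_mem ha hx ht
  set Smin : ℝ → ℝ := fun t => ∑ i : Fin n,
    min ((x i - a i) * Dlo (γ t) (Pi.single i 1)) ((x i - a i) * Dhi (γ t) (Pi.single i 1))
    with hSmin
  set Smax : ℝ → ℝ := fun t => ∑ i : Fin n,
    max ((x i - a i) * Dlo (γ t) (Pi.single i 1)) ((x i - a i) * Dhi (γ t) (Pi.single i 1))
    with hSmax
  -- continuity of Smax on [0,1]
  have hγc : Continuous γ := by
    apply continuous_const.add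
    exact continuous_id.smul continuous_const
  have hmaps : MapsTo γ (Icc 0 1) Ω := fun t ht => hseg t ht
  have hDloγ : ∀ i : Fin n, ContinuousOn (fun t => Dlo (γ t) (Pi.single i 1)) (Icc 0 1) := by
    intro i
    exact ((ContinuousLinearMap.apply ℝ ℝ (Pi.single i (1:ℝ))).continuous.comp_continuousOn
      (hclo.comp hγc.continuousOn hmaps))
  have hDhiγ : ∀ i : Fin n, ContinuousOn (fun t => Dhi (γ t) (Pi.single i 1)) (Icc 0 1) := by
    intro i
    exact ((ContinuousLinearMap.apply ℝ ℝ (Pi.single i (1:ℝ))).continuous.comp_continuousOn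
      (hchi.comp hγc.continuousOn hmaps))
  have hSmaxc : ContinuousOn Smax (Icc 0 1) := by
    apply continuousOn_finset_sum
    intro i _
    exact (continuousOn_const.mul (hDloγ i)).sup (continuousOn_const.mul (hDhiγ i))
  -- Smin ≤ Dlo, Dhi evals ≤ Smax
  have key : ∀ t ∈ Icc (0:ℝ) 1,
      Smin t ≤ Dlo (γ t) (x - a) ∧ Dlo (γ t) (x - a) ≤ Smax t ∧
      Smin t ≤ Dhi (γ t) (x - a) ∧ Dhi (γ t) (x - a) ≤ Smax t := by
    intro t _
    have hlo := clm_eval_sum (Dlo (γ t)) (x - a)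
    have hhi := clm_eval_sum (Dhi (γ t)) (x - a)
    have hsub : ∀ i : Fin n, (x - a) i = x i - a i := fun i => rfl
    simp only [hsub] at hlo hhi
    refine ⟨?_, ?_, ?_, ?_⟩
    · rw [hlo]; exact Finset.sum_le_sum fun i _ => min_le_left _ _
    · rw [hlo]; exact Finset.sum_le_sum fun i _ => le_max_left _ _
    · rw [hhi]; exact Finset.sum_le_sum fun i _ => min_le_right _ _
    · rw [hhi]; exact Finset.sum_le_sum fun i _ => le_max_right _ _
  have hSle : ∀ t ∈ Icc (0:ℝ) 1, Smin t ≤ Smax t :=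
    fun t ht => le_trans (key t ht).1 (key t ht).2.1
  obtain ⟨t₁, ht₁, heq₁⟩ := mvt_segment hdlo hseg
  obtain ⟨t₂, ht₂, heq₂⟩ := mvt_segment hdhi hseg
  -- z between the two values
  obtain ⟨hz1, hz2⟩ := hz
  have hband : ∃ t ∈ Icc (0:ℝ) 1, z ∈ Icc (Smin t) (Smax t) := by
    rcases le_total (flo x - flo a) (fhi x - fhi a) with hor | hor
    · rw [min_eq_left hor] at hz1
      rw [max_eq_right hor] at hz2
      exact ivt_band ht₁ ht₂ hSmaxc hSle
        (heq₁ ▸ (key t₁ ht₁).1) (heq₁ ▸ (key t₁ ht₁).2.1)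
        (heq₂ ▸ (key t₂ ht₂).2.2.1) (heq₂ ▸ (key t₂ ht₂).2.2.2) hz1 hz2
    · rw [min_eq_right hor] at hz1
      rw [max_eq_left hor] at hz2
      exact ivt_band ht₂ ht₁ hSmaxc hSle
        (heq₂ ▸ (key t₂ ht₂).2.2.1) (heq₂ ▸ (key t₂ ht₂).2.2.2)
        (heq₁ ▸ (key t₁ ht₁).1) (heq₁ ▸ (key t₁ ht₁).2.1) hz1 hz2
  obtain ⟨t, ht, hzt⟩ := hband
  refine Set.mem_iUnion₂.2 ⟨γ t, ?_, hzt⟩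
  rw [segment_eq_image']
  exact ⟨t, ht, rfl⟩
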